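/- Let c, s be positive integers and index coordinates by pairs (l,i) ∈ {1,…,c} × {1,…,s} (c blocks each of size s; total dimension d = c·s). Let a ∈ ℝ^d be nonzero and for each block l write a^{(l)} = (a_{(l,i)})_{i=1}^s. Let ω' = #{l : a^{(l)} ≠ 0} be the number of blocks on which a has a nonzero entry. Then the supremum of (∑_{l=1}^c ∑_{i=1}^s a_{(l,i)} x_{(l,i)})² over all x ∈ ℝ^d satisfying ∑_{l=1}^c (∑_{i=1}^s a_{(l,i)} x_{(l,i)})² ≤ 1 equals ω' (and the supremum is attained). -/

import Mathlib

open Finset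

/-- Coordinates are indexed by pairs `(l,i) ∈ Fin c × Fin s`
(`c` blocks each of size `s`).  For a nonzero vector `a`, with `ω'` the number of
blocks on which `a` has a nonzero entry, the supremum of
`(∑ l, ∑ i, a (l,i) * x (l,i))^2` over all `x` with
`∑ l, (∑ i, a (l,i) * x (l,i))^2 ≤ 1` equals `ω'`, and it is attained. -/
theorem stmt_1 (c s : ℕ) (hc : 0 < c) (hs : 0 < s)
    (a : Fin c × Fin s → ℝ) (ha : a ≠ 0) :
    IsGreatest
      {y : ℝ | ∃ x : Fin c × Fin s → ℝ,
        (∑ l : Fin c, (∑ i : Fin s, a (l, i) * x (l, i)) ^ 2) ≤ 1 ∧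
        y = (∑ l : Fin c, ∑ i : Fin s, a (l, i) * x (l, i)) ^ 2}
      ((Finset.univ.filter fun l : Fin c => ∃ i : Fin s, a (l, i) ≠ 0).card : ℝ) := by
  classical
  set S : Finset (Fin c) := Finset.univ.filter fun l : Fin c => ∃ i : Fin s, a (l, i) ≠ 0
    with hS
  have hSmem : ∀ l : Fin c, l ∈ S ↔ ∃ i : Fin s, a (l, i) ≠ 0 := by
    intro l; simp [hS]
  -- S is nonempty
  have hSne : S.Nonempty := by
    obtain ⟨p, hp⟩ := Function.ne_iff.mp ha
    exact ⟨p.1, (hSmem p.1).mpr ⟨p.2, by simpa using hp⟩⟩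
  have hω : (0 : ℝ) < S.card := by exact_mod_cast Finset.card_pos.mpr hSne
  have hωs : Real.sqrt S.card ≠ 0 := by positivity
  constructor
  · -- attained
    -- for each l pick a witness index
    have hne : Nonempty (Fin s) := ⟨⟨0, hs⟩⟩
    set j : Fin c → Fin s := fun l =>
      if h : ∃ i, a (l, i) ≠ 0 then h.choose else Classical.arbitrary _ with hj
    have hja : ∀ l ∈ S, a (l, j l) ≠ 0 := by
      intro l hl
      have h := (hSmem l).mp hl
      simp only [hj, dif_pos h]
      exact h.choose_spec
    refine ⟨fun p => if p.1 ∈ S ∧ p.2 = j p.1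
        then 1 / (Real.sqrt S.card * a (p.1, j p.1)) else 0, ?_, ?_⟩
    all_goals
      have key : ∀ l : Fin c,
          (∑ i : Fin s, a (l, i) * (if l ∈ S ∧ i = j l
            then 1 / (Real.sqrt S.card * a (l, j l)) else 0))
          = if l ∈ S then 1 / Real.sqrt S.card else 0 := by
        intro l
        by_cases hl : l ∈ S
        · rw [Finset.sum_eq_single (j l)]
          · simp only [hl, true_and, if_pos rfl, if_pos hl, ↓reduceIte]
            field_simp [hja l hl]
          · intro i _ hi
            simp [hi, hl]
          · simp
        · simp [hl]
    · simp only [key, apply_ite (fun t : ℝ => t ^ 2), zero_pow, OfNat.ofNat_ne_zero,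
        ne_eq, not_false_eq_true]
      rw [Finset.sum_ite_mem, Finset.univ_inter, Finset.sum_const, nsmul_eq_mul,
        div_pow, one_pow, Real.sq_sqrt hω.le,
        mul_one_div, div_self (ne_of_gt hω)]
    · simp only [key]
      rw [Finset.sum_ite_mem, Finset.univ_inter, Finset.sum_const, nsmul_eq_mul,
        mul_one_div, div_pow, Real.sq_sqrt hω.le, sq]
      field_simp
  · -- upper bound
    rintro y ⟨x, hx, rfl⟩
    set b : Fin c → ℝ := fun l => ∑ i : Fin s, a (l, i) * x (l, i) with hb
    have hb0 : ∀ l ∉ S, b l = 0 := by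
      intro l hl
      have : ∀ i : Fin s, a (l, i) = 0 := by
        intro i
        by_contra h
        exact hl ((hSmem l).mpr ⟨i, h⟩)
      simp [hb, this]
    have h1 : (∑ l : Fin c, b l) = ∑ l ∈ S, b l :=
      (Finset.sum_subset (Finset.subset_univ S) (fun l _ hl => hb0 l hl)).symm
    calc (∑ l : Fin c, b l) ^ 2 = (∑ l ∈ S, b l) ^ 2 := by rw [h1]
      _ ≤ S.card * ∑ l ∈ S, b l ^ 2 := by
          exact sq_sum_le_card_mul_sum_sq
      _ ≤ S.card * ∑ l : Fin c, b l ^ 2 := by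
          apply mul_le_mul_of_nonneg_left _ hω.le
          exact Finset.sum_le_sum_of_subset_of_nonneg (Finset.subset_univ S)
            (fun l _ _ => sq_nonneg _)
      _ ≤ S.card * 1 := by
          exact mul_le_mul_of_nonneg_left hx hω.le
      _ = S.card := mul_one _
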